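/- Bridge-line criterion after a bridge outage: fix a bus ĵ ∈ N and a proportional control α, and let l ∈ E be a bridge of G whose removal splits G into two connected components G₁ (containing ĵ) and G₂. If no participating bus lies in G₂, then Σ_{k∈N} α_k D_{l,kĵ}(b) = 0 for every susceptance vector b ∈ (0,∞)^m; conversely, if some participating bus lies in G₂, then the set { b ∈ (0,∞)^m : Σ_{k∈N} α_k D_{l,kĵ}(b) = 0 } has m-dimensional Lebesgue measure zero. -/

import Mathlib

open Matrix MeasureTheory

variable {n m : ℕ}

/-- Incidence matrix of an oriented network with buses `Fin (n+1)` (bus `Fin.last n` is the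
reference bus) and oriented lines indexed by `Fin m` with endpoint maps `src`, `tgt`. -/
def incM (src tgt : Fin m → Fin (n+1)) : Matrix (Fin (n+1)) (Fin m) ℝ :=
  Matrix.of fun i l => if src l = i then 1 else if tgt l = i then -1 else 0

/-- The matrix `A` built from a Laplacian `L`: its top-left `n × n` block is the inverse of the
reduced Laplacian (obtained by deleting the last row and column) and all other entries are `0`. -/
noncomputable def AmatL (L : Matrix (Fin (n+1)) (Fin (n+1)) ℝ) : Matrix (Fin (n+1)) (Fin (n+1)) ℝ :=
  Matrix.of fun i j =>
    if h : i ≠ Fin.last n ∧ j ≠ Fin.last n then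
      (L.submatrix Fin.castSucc Fin.castSucc)⁻¹ (i.castPred h.1) (j.castPred h.2)
    else 0

/-- The matrix `A` of the network with susceptance vector `b`. -/
noncomputable def Amat (src tgt : Fin m → Fin (n+1)) (b : Fin m → ℝ) : Matrix (Fin (n+1)) (Fin (n+1)) ℝ :=
  AmatL (incM src tgt * Matrix.diagonal b * (incM src tgt)ᵀ)

/-- Power transfer distribution factor `D_{l, k ĵ}`. -/
noncomputable def ptdf (src tgt : Fin m → Fin (n+1)) (b : Fin m → ℝ) (l : Fin m) (k jh : Fin (n+1)) : ℝ :=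
  b l * (Amat src tgt b (src l) k + Amat src tgt b (tgt l) jh
       - Amat src tgt b (src l) jh - Amat src tgt b (tgt l) k)

/-- The underlying simple graph of the network. -/
def netGraph (src tgt : Fin m → Fin (n+1)) : SimpleGraph (Fin (n+1)) :=
  SimpleGraph.fromRel fun a c => ∃ l, src l = a ∧ tgt l = c

/-- There is a simple path in the network from `jh` to `k` that contains line `l`. -/
def PathThrough (src tgt : Fin m → Fin (n+1)) (jh k : Fin (n+1)) (l : Fin m) : Prop :=
  ∃ w : (netGraph src tgt).Walk jh k, w.IsPath ∧ s(src l, tgt l) ∈ w.edges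

/-- Lines `e₁` and `e₂` belong to the same block: they are equal or lie on a common simple cycle. -/
def sameBlock (src tgt : Fin m → Fin (n+1)) (e₁ e₂ : Fin m) : Prop :=
  e₁ = e₂ ∨ ∃ (v : Fin (n+1)) (c : (netGraph src tgt).Walk v v),
    c.IsCycle ∧ s(src e₁, tgt e₁) ∈ c.edges ∧ s(src e₂, tgt e₂) ∈ c.edges

/-- A cut vertex: a vertex whose removal disconnects the graph. -/
def IsCutVertex {V : Type*} (G : SimpleGraph V) (v : V) : Prop :=
  ¬ (G.induce {w : V | w ≠ v}).Connected

/-- The subgraph of the network with only the lines in `S`. -/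
def netGraphOn (src tgt : Fin m → Fin (n+1)) (S : Set (Fin m)) : SimpleGraph (Fin (n+1)) :=
  SimpleGraph.fromRel fun a c => ∃ l ∈ S, src l = a ∧ tgt l = c

def maskIn (F : Finset (Fin m)) (b : Fin m → ℝ) : Fin m → ℝ := fun l => if l ∈ F then b l else 0
def maskOut (F : Finset (Fin m)) (b : Fin m → ℝ) : Fin m → ℝ := fun l => if l ∈ F then 0 else b l

/-- Column submatrix `C_F` (columns outside `F` zeroed out). -/
def CFmat (src tgt : Fin m → Fin (n+1)) (F : Finset (Fin m)) : Matrix (Fin (n+1)) (Fin m) ℝ :=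
  Matrix.of fun i l => if l ∈ F then incM src tgt i l else 0

/-- Column submatrix `C_{−F}` (columns in `F` zeroed out). -/
def CmFmat (src tgt : Fin m → Fin (n+1)) (F : Finset (Fin m)) : Matrix (Fin (n+1)) (Fin m) ℝ :=
  Matrix.of fun i l => if l ∈ F then 0 else incM src tgt i l

/-- Diagonal susceptance matrix `B_F`. -/
def BFmat (b : Fin m → ℝ) (F : Finset (Fin m)) : Matrix (Fin m) (Fin m) ℝ :=
  Matrix.diagonal (maskIn F b)

/-- Diagonal susceptance matrix `B_{−F}`. -/
def BmFmat (b : Fin m → ℝ) (F : Finset (Fin m)) : Matrix (Fin m) (Fin m) ℝ :=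
  Matrix.diagonal (maskOut F b)

/-- The matrix `A_{−F}` of the post-contingency network `(N, E ∖ F)`. -/
noncomputable def AmFmat (src tgt : Fin m → Fin (n+1)) (b : Fin m → ℝ) (F : Finset (Fin m)) :
    Matrix (Fin (n+1)) (Fin (n+1)) ℝ :=
  AmatL (CmFmat src tgt F * BmFmat b F * (CmFmat src tgt F)ᵀ)

/-- The `k`-th standard unit vector of `ℝ^{n+1}`. -/
def evec (k : Fin (n+1)) : Fin (n+1) → ℝ := Pi.single k 1
open scoped Classical

section MyBridgeAux
variable (src tgt : Fin m → Fin (n+1))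

lemma myIncM_eq (hsl : ∀ l, src l ≠ tgt l) (i : Fin (n+1)) (l : Fin m) :
    incM src tgt i l = (if src l = i then (1:ℝ) else 0) - (if tgt l = i then 1 else 0) := by
  by_cases h1 : src l = i
  · have h2 : tgt l ≠ i := fun h2 => hsl l (h1.trans h2.symm)
    simp [incM, h1, h2]
  · by_cases h2 : tgt l = i <;> simp [incM, h1, h2]

lemma myIncM_dot (hsl : ∀ l, src l ≠ tgt l) (e : Fin m) (f : Fin (n+1) → ℝ) :
    ∑ v, incM src tgt v e * f v = f (src e) - f (tgt e) := by
  simp only [myIncM_eq src tgt hsl, sub_mul, one_mul, ite_mul, zero_mul]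
  rw [Finset.sum_sub_distrib]
  simp

lemma myL_entry (b : Fin m → ℝ) (v w : Fin (n+1)) :
    (incM src tgt * Matrix.diagonal b * (incM src tgt)ᵀ) v w
      = ∑ e, incM src tgt v e * b e * incM src tgt w e := by
  rw [Matrix.mul_apply]
  simp_rw [Matrix.mul_diagonal, Matrix.transpose_apply]

lemma myL_mulVec (hsl : ∀ l, src l ≠ tgt l) (b : Fin m → ℝ) (θ : Fin (n+1) → ℝ) (v : Fin (n+1)) :
    ((incM src tgt * Matrix.diagonal b * (incM src tgt)ᵀ) *ᵥ θ) v
      = ∑ e, incM src tgt v e * (b e * (θ (src e) - θ (tgt e))) := by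
  have key : ∀ e, (∑ w, (incM src tgt v e * b e * incM src tgt w e) * θ w)
      = incM src tgt v e * (b e * (θ (src e) - θ (tgt e))) := by
    intro e
    rw [← myIncM_dot src tgt hsl e θ, Finset.mul_sum, Finset.mul_sum]
    exact Finset.sum_congr rfl fun w _ => by ring
  simp only [Matrix.mulVec, dotProduct, myL_entry, Finset.sum_mul]
  rw [Finset.sum_comm]
  exact Finset.sum_congr rfl fun e _ => key e

lemma myConnConst (hconn : (netGraph src tgt).Connected)
    (f : Fin (n+1) → ℝ) (hf : ∀ e, f (src e) = f (tgt e)) (v w : Fin (n+1)) : f v = f w := by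
  obtain ⟨p⟩ := hconn v w
  induction p with
  | nil => rfl
  | cons h p ih =>
    refine Eq.trans ?_ ih
    obtain ⟨-, ⟨e, he1, he2⟩ | ⟨e, he1, he2⟩⟩ := (SimpleGraph.fromRel_adj _ _ _).mp h
    · rw [← he1, ← he2]; exact hf e
    · rw [← he1, ← he2]; exact (hf e).symm

lemma myLbar_posDef (hsl : ∀ l, src l ≠ tgt l) (hconn : (netGraph src tgt).Connected)
    (b : Fin m → ℝ) (hb : ∀ e, 0 < b e) :
    (((incM src tgt * Matrix.diagonal b * (incM src tgt)ᵀ).submatrix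
        Fin.castSucc Fin.castSucc)).PosDef := by
  rw [Matrix.posDef_iff_dotProduct_mulVec]
  constructor
  · show _ = _
    ext i j
    simp only [Matrix.conjTranspose_apply, Matrix.submatrix_apply, star_trivial]
    rw [myL_entry, myL_entry]
    exact Finset.sum_congr rfl fun e _ => by ring
  · intro x hx
    set xt : Fin (n+1) → ℝ := Fin.snoc x 0 with hxt
    have hquad : dotProduct (star x)
        (((incM src tgt * Matrix.diagonal b * (incM src tgt)ᵀ).submatrix
          Fin.castSucc Fin.castSucc) *ᵥ x)
        = ∑ e, b e * (xt (src e) - xt (tgt e))^2 := by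
      have hmv : ∀ v : Fin n,
          (((incM src tgt * Matrix.diagonal b * (incM src tgt)ᵀ).submatrix
            Fin.castSucc Fin.castSucc) *ᵥ x) v
          = ((incM src tgt * Matrix.diagonal b * (incM src tgt)ᵀ) *ᵥ xt) v.castSucc := by
        intro v
        simp only [Matrix.mulVec, dotProduct, Matrix.submatrix_apply]
        rw [Fin.sum_univ_castSucc]
        simp [hxt]
      have h1 : dotProduct (star x)
          (((incM src tgt * Matrix.diagonal b * (incM src tgt)ᵀ).submatrix
            Fin.castSucc Fin.castSucc) *ᵥ x)
          = ∑ v : Fin (n+1), xt v *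
              ((incM src tgt * Matrix.diagonal b * (incM src tgt)ᵀ) *ᵥ xt) v := by
        rw [Fin.sum_univ_castSucc]
        simp only [dotProduct, star_trivial, hxt, Fin.snoc_castSucc, Fin.snoc_last,
          zero_mul, add_zero, Pi.star_apply]
        exact Finset.sum_congr rfl fun v _ => by rw [hmv v]
      rw [h1]
      simp_rw [myL_mulVec src tgt hsl b xt]
      simp_rw [Finset.mul_sum]
      rw [Finset.sum_comm]
      refine Finset.sum_congr rfl fun e _ => ?_
      have := myIncM_dot src tgt hsl e xt
      calc ∑ v, xt v * (incM src tgt v e * (b e * (xt (src e) - xt (tgt e))))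
          = (∑ v, incM src tgt v e * xt v) * (b e * (xt (src e) - xt (tgt e))) := by
            rw [Finset.sum_mul]; exact Finset.sum_congr rfl fun v _ => by ring
        _ = b e * (xt (src e) - xt (tgt e))^2 := by rw [this]; ring
    rw [hquad]
    have hterm : ∀ e, (0:ℝ) ≤ b e * (xt (src e) - xt (tgt e))^2 :=
      fun e => mul_nonneg (hb e).le (sq_nonneg _)
    rcases (Finset.sum_nonneg (fun e _ => hterm e)).lt_or_eq with h | h
    · exact h
    · exfalso
      have hzero : ∀ e, b e * (xt (src e) - xt (tgt e))^2 = 0 := by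
        intro e
        have := (Finset.sum_eq_zero_iff_of_nonneg (fun e _ => hterm e)).mp h.symm
        exact this e (Finset.mem_univ e)
      have hfe : ∀ e, xt (src e) = xt (tgt e) := by
        intro e
        have h2 := hzero e
        have hb' := (hb e).ne'
        have h3 : (xt (src e) - xt (tgt e))^2 = 0 := by
          rcases mul_eq_zero.mp h2 with h3 | h3
          · exact absurd h3 hb'
          · exact h3
        have h4 := pow_eq_zero_iff (n := 2) (by norm_num) |>.mp h3
        linarith [sub_eq_zero.mp h4]
      apply hx
      funext v
      have : xt v.castSucc = xt (Fin.last n) :=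
        myConnConst src tgt hconn xt hfe _ _
      simpa [hxt] using this

lemma myAmat_last (b : Fin m → ℝ) (j : Fin (n+1)) :
    Amat src tgt b (Fin.last n) j = 0 := by
  simp [Amat, AmatL]

lemma myAmat_entry (b : Fin m → ℝ) (j : Fin (n+1)) (v : Fin n) :
    Amat src tgt b (Fin.castSucc v) j
      = ∑ w, ((incM src tgt * Matrix.diagonal b * (incM src tgt)ᵀ).submatrix
          Fin.castSucc Fin.castSucc)⁻¹ v w * (if Fin.castSucc w = j then 1 else 0) := by
  by_cases hj : j = Fin.last n
  · subst hj
    rw [Finset.sum_eq_zero (fun w _ => by simp [(Fin.castSucc_lt_last w).ne])]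
    simp [Amat, AmatL]
  · rw [Finset.sum_eq_single (j.castPred hj)]
    · simp [Amat, AmatL, (Fin.castSucc_lt_last v).ne, hj, Fin.castSucc_castPred,
        Fin.castPred_castSucc]
    · intro w _ hw
      have : Fin.castSucc w ≠ j := by
        intro hc
        exact hw (by simp [← hc, Fin.castPred_castSucc])
      simp [this]
    · intro h
      exact absurd (Finset.mem_univ _) h

lemma myPtdf_bridge (hsl : ∀ l, src l ≠ tgt l) (hconn : (netGraph src tgt).Connected)
    (jhat : Fin (n+1)) (l : Fin m)
    (hbridge : ¬ (netGraphOn src tgt {e | e ≠ l}).Reachable (src l) (tgt l))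
    (hjhat : (netGraphOn src tgt {e | e ≠ l}).Reachable jhat (src l))
    (b : Fin m → ℝ) (hb : ∀ e, 0 < b e) (k : Fin (n+1)) :
    ptdf src tgt b l k jhat =
      if (netGraphOn src tgt {e | e ≠ l}).Reachable k (tgt l) then -1 else 0 := by
  have hpd := myLbar_posDef src tgt hsl hconn b hb
  have hdet : IsUnit ((incM src tgt * Matrix.diagonal b * (incM src tgt)ᵀ).submatrix
      Fin.castSucc Fin.castSucc).det := hpd.det_pos.ne'.isUnit
  set θ : Fin (n+1) → ℝ := fun v => Amat src tgt b v k - Amat src tgt b v jhat with hθ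
  set p : Fin (n+1) → ℝ :=
    fun v => (if v = k then (1:ℝ) else 0) - (if v = jhat then 1 else 0) with hp
  set G2 : Fin (n+1) → Prop :=
    fun v => (netGraphOn src tgt {e | e ≠ l}).Reachable v (tgt l) with hG2
  set χ : Fin (n+1) → ℝ := fun v => if G2 v then 1 else 0 with hχ
  -- θ restricted to the first n coordinates solves the reduced system
  have hθbar : (fun w => θ (Fin.castSucc w))
      = ((incM src tgt * Matrix.diagonal b * (incM src tgt)ᵀ).submatrix
          Fin.castSucc Fin.castSucc)⁻¹ *ᵥ (fun w => p (Fin.castSucc w)) := by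
    funext w
    simp only [hθ, myAmat_entry src tgt b k w, myAmat_entry src tgt b jhat w,
      Matrix.mulVec, dotProduct, hp]
    rw [← Finset.sum_sub_distrib]
    exact Finset.sum_congr rfl fun t _ => by ring
  -- the full vector θ satisfies L θ = p
  have hLθ : ∀ v, ((incM src tgt * Matrix.diagonal b * (incM src tgt)ᵀ) *ᵥ θ) v = p v := by
    have hθlast : θ (Fin.last n) = 0 := by
      simp [hθ, myAmat_last]
    have hcs : ∀ u : Fin n,
        ((incM src tgt * Matrix.diagonal b * (incM src tgt)ᵀ) *ᵥ θ) (Fin.castSucc u)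
          = p (Fin.castSucc u) := by
      intro u
      have h1 : ((incM src tgt * Matrix.diagonal b * (incM src tgt)ᵀ) *ᵥ θ) (Fin.castSucc u)
          = (((incM src tgt * Matrix.diagonal b * (incM src tgt)ᵀ).submatrix
              Fin.castSucc Fin.castSucc) *ᵥ (fun w => θ (Fin.castSucc w))) u := by
        simp only [Matrix.mulVec, dotProduct, Matrix.submatrix_apply]
        rw [Fin.sum_univ_castSucc, hθlast, mul_zero, add_zero]
      rw [h1, hθbar, Matrix.mulVec_mulVec, Matrix.mul_nonsing_inv _ hdet, Matrix.one_mulVec]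
    have htot : ∑ v, ((incM src tgt * Matrix.diagonal b * (incM src tgt)ᵀ) *ᵥ θ) v = 0 := by
      simp_rw [myL_mulVec src tgt hsl b θ]
      rw [Finset.sum_comm]
      apply Finset.sum_eq_zero
      intro e _
      have hcol : ∑ v, incM src tgt v e * (fun _ : Fin (n+1) => (1:ℝ)) v = 0 := by
        rw [myIncM_dot src tgt hsl e]; ring
      calc ∑ v, incM src tgt v e * (b e * (θ (src e) - θ (tgt e)))
          = (∑ v, incM src tgt v e * 1) * (b e * (θ (src e) - θ (tgt e))) := by
            rw [Finset.sum_mul]; exact Finset.sum_congr rfl fun v _ => by ring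
        _ = 0 := by rw [show (∑ v, incM src tgt v e * (1:ℝ)) = 0 from hcol, zero_mul]
    have hptot : ∑ v, p v = 0 := by
      simp only [hp]
      rw [Finset.sum_sub_distrib]
      simp
    have hlast : ((incM src tgt * Matrix.diagonal b * (incM src tgt)ᵀ) *ᵥ θ) (Fin.last n)
        = p (Fin.last n) := by
      rw [Fin.sum_univ_castSucc] at htot hptot
      have heq : ∑ u : Fin n,
          ((incM src tgt * Matrix.diagonal b * (incM src tgt)ᵀ) *ᵥ θ) (Fin.castSucc u)
          = ∑ u : Fin n, p (Fin.castSucc u) :=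
        Finset.sum_congr rfl fun u _ => hcs u
      linarith
    intro v
    refine Fin.lastCases ?_ ?_ v
    · exact hlast
    · exact hcs
  -- χ-weighted sum of L θ equals the flow on the bridge
  have hflow : ∑ v, χ v * ((incM src tgt * Matrix.diagonal b * (incM src tgt)ᵀ) *ᵥ θ) v
      = - (b l * (θ (src l) - θ (tgt l))) := by
    simp_rw [myL_mulVec src tgt hsl b θ, Finset.mul_sum]
    rw [Finset.sum_comm]
    have hterm : ∀ e, ∑ v, χ v * (incM src tgt v e * (b e * (θ (src e) - θ (tgt e))))
        = (χ (src e) - χ (tgt e)) * (b e * (θ (src e) - θ (tgt e))) := by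
      intro e
      rw [← myIncM_dot src tgt hsl e χ, Finset.sum_mul]
      exact Finset.sum_congr rfl fun v _ => by ring
    rw [Finset.sum_congr rfl fun e _ => hterm e]
    rw [Finset.sum_eq_single l]
    · have h1 : χ (src l) = 0 := by simp only [hχ]; rw [if_neg]; exact hbridge
      have h2 : χ (tgt l) = 1 := by
        simp only [hχ]; rw [if_pos]; exact SimpleGraph.Reachable.refl _
      rw [h1, h2]; ring
    · intro e _ hel
      have hadj : (netGraphOn src tgt {e' | e' ≠ l}).Adj (src e) (tgt e) := by
        show (SimpleGraph.fromRel fun a c => ∃ l' ∈ {e' : Fin m | e' ≠ l}, src l' = a ∧ tgt l' = c).Adj (src e) (tgt e)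
        exact (SimpleGraph.fromRel_adj _ _ _).mpr ⟨hsl e, Or.inl ⟨e, hel, rfl, rfl⟩⟩
      have hiff : G2 (src e) ↔ G2 (tgt e) :=
        ⟨fun h => hadj.symm.reachable.trans h, fun h => hadj.reachable.trans h⟩
      have : χ (src e) = χ (tgt e) := by
        simp only [hχ]
        by_cases h : G2 (src e)
        · rw [if_pos h, if_pos (hiff.mp h)]
        · rw [if_neg h, if_neg (fun h' => h (hiff.mpr h'))]
      rw [this, sub_self, zero_mul]
    · intro h; exact absurd (Finset.mem_univ _) h
  -- χ-weighted sum of p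
  have hχp : ∑ v, χ v * p v = χ k := by
    simp only [hp, mul_sub]
    rw [Finset.sum_sub_distrib]
    have h1 : ∑ v, χ v * (if v = k then (1:ℝ) else 0) = χ k := by
      simp [mul_ite]
    have h2 : ∑ v, χ v * (if v = jhat then (1:ℝ) else 0) = χ jhat := by
      simp [mul_ite]
    have h3 : χ jhat = 0 := by
      simp only [hχ]
      rw [if_neg]
      intro h
      exact hbridge (hjhat.symm.trans h)
    rw [h1, h2, h3, sub_zero]
  have hkey : b l * (θ (src l) - θ (tgt l)) = - χ k := by
    have := hflow
    rw [Finset.sum_congr rfl fun v _ => by rw [hLθ v]] at this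
    rw [hχp] at this
    linarith
  have hptdf : ptdf src tgt b l k jhat = b l * (θ (src l) - θ (tgt l)) := by
    simp only [ptdf, hθ]
    ring
  rw [hptdf, hkey]
  simp only [hχ, hG2]
  by_cases h : (netGraphOn src tgt {e | e ≠ l}).Reachable k (tgt l)
  · rw [if_pos h, if_pos h]
  · rw [if_neg h, if_neg h]; ring

end MyBridgeAux
/-- bridge-line criterion after a bridge outage. Let `l ∈ E` be a bridge of
the connected network whose removal splits it into the component `G₁` of `src l` (containing
`jhat`) and the component `G₂` of `tgt l`. If no participating bus lies in `G₂`, then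
`∑_k α_k D_{l,kĵ}(b) = 0` for every positive susceptance vector `b`; conversely, if some
participating bus lies in `G₂`, then the set of positive susceptance vectors with
`∑_k α_k D_{l,kĵ}(b) = 0` has `m`-dimensional Lebesgue measure zero. -/
theorem bridge_line_criterion
    {n m : ℕ} (src tgt : Fin m → Fin (n+1)) (hsl : ∀ l, src l ≠ tgt l)
    (hconn : (netGraph src tgt).Connected)
    (α : Fin (n+1) → ℝ) (hα0 : ∀ k, 0 ≤ α k) (hα1 : ∑ k, α k = 1)
    (jhat : Fin (n+1)) (l : Fin m)
    (hbridge : ¬ (netGraphOn src tgt {e | e ≠ l}).Reachable (src l) (tgt l))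
    (hjhat : (netGraphOn src tgt {e | e ≠ l}).Reachable jhat (src l)) :
    ((∀ k, 0 < α k → ¬ (netGraphOn src tgt {e | e ≠ l}).Reachable k (tgt l)) →
      ∀ b : Fin m → ℝ, (∀ e, 0 < b e) → ∑ k, α k * ptdf src tgt b l k jhat = 0)
    ∧ ((∃ k, 0 < α k ∧ (netGraphOn src tgt {e | e ≠ l}).Reachable k (tgt l)) →
      volume {b : Fin m → ℝ | (∀ e, 0 < b e) ∧
        ∑ k, α k * ptdf src tgt b l k jhat = 0} = 0) := by
  classical
  have hval : ∀ (b : Fin m → ℝ), (∀ e, 0 < b e) → ∀ k,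
      ptdf src tgt b l k jhat =
        if (netGraphOn src tgt {e | e ≠ l}).Reachable k (tgt l) then -1 else 0 := by
    intro b hb k
    rw [myPtdf_bridge src tgt hsl hconn jhat l hbridge hjhat b hb k]
  constructor
  · intro hno b hb
    rw [Finset.sum_congr rfl fun k _ => by rw [hval b hb k]]
    apply Finset.sum_eq_zero
    intro k _
    by_cases h : (netGraphOn src tgt {e | e ≠ l}).Reachable k (tgt l)
    · have : α k = 0 := by
        by_contra h0
        exact hno k (lt_of_le_of_ne (hα0 k) (Ne.symm h0)) h
      rw [this, zero_mul]
    · rw [if_neg h, mul_zero]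
  · rintro ⟨k0, hk0, hk0r⟩
    have hempty : {b : Fin m → ℝ | (∀ e, 0 < b e) ∧
        ∑ k, α k * ptdf src tgt b l k jhat = 0} = ∅ := by
      rw [Set.eq_empty_iff_forall_notMem]
      rintro b ⟨hb, hsum⟩
      rw [Finset.sum_congr rfl fun k _ => by rw [hval b hb k]] at hsum
      have hsum2 : ∑ k, α k *
          (if (netGraphOn src tgt {e | e ≠ l}).Reachable k (tgt l) then (-1:ℝ) else 0)
          = - ∑ k, (if (netGraphOn src tgt {e | e ≠ l}).Reachable k (tgt l) then α k else 0) := by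
        rw [← Finset.sum_neg_distrib]
        refine Finset.sum_congr rfl fun k _ => ?_
        by_cases h : (netGraphOn src tgt {e | e ≠ l}).Reachable k (tgt l)
        · rw [if_pos h, if_pos h]; ring
        · rw [if_neg h, if_neg h]; ring
      have hpos : 0 < ∑ k, (if (netGraphOn src tgt {e | e ≠ l}).Reachable k (tgt l)
          then α k else 0) := by
        have hle : α k0 ≤ ∑ k, (if (netGraphOn src tgt {e | e ≠ l}).Reachable k (tgt l)
            then α k else 0) := by
          have := Finset.single_le_sum (f := fun k =>
              (if (netGraphOn src tgt {e | e ≠ l}).Reachable k (tgt l) then α k else 0))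
            (fun k _ => by
              show (0:ℝ) ≤ if (netGraphOn src tgt {e | e ≠ l}).Reachable k (tgt l) then α k else 0
              by_cases h : (netGraphOn src tgt {e | e ≠ l}).Reachable k (tgt l)
              · rw [if_pos h]; exact hα0 k
              · rw [if_neg h]) (Finset.mem_univ k0)
          rwa [if_pos hk0r] at this
        exact lt_of_lt_of_le hk0 hle
      rw [hsum2] at hsum
      linarith
    rw [hempty]
    exact measure_empty
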